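/- Let X be a finite set of positive integers, let k and Δ be nonnegative reals, let (X', X'') be a (k,Δ)-halver of X, and let m be a natural number with m ≥ k/2 + Δ. Then SUMS_{≤k}(X) ⊆ SUMS_{≤m}(X') + SUMS_{≤m}(X'') ⊆ SUMS(X). -/

import Mathlib

open Pointwise

/-- `SUM S` is the sum of the elements of the finite set `S`. -/
def SUM (S : Finset ℕ) : ℕ := S.sum id

/-- `SUMSle X m` is the set of all subset sums of `X` using at most `m` elements. -/
def SUMSle (X : Finset ℕ) (m : ℕ) : Set ℕ := {y | ∃ S ⊆ X, S.card ≤ m ∧ SUM S = y}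

/-- `SUMSleR X k` is the set of all subset sums of `X` using at most `k` elements,
for a real bound `k`. -/
def SUMSleR (X : Finset ℕ) (k : ℝ) : Set ℕ := {y | ∃ S ⊆ X, (S.card : ℝ) ≤ k ∧ SUM S = y}

/-- `SUMS X` is the set of all subset sums of `X`. -/
def SUMS (X : Finset ℕ) : Set ℕ := {y | ∃ S ⊆ X, SUM S = y}

/-- `(X', X'')` is a `(k, Δ)`-halver of `X`: a partition of `X` into two disjoint parts such
that for every `S ⊆ X` with `|S| ≤ k` there is `Shat ⊆ X` with `|Shat| ≤ k`,
`SUM Shat = SUM S`, and `|Shat ∩ X'|, |Shat ∩ X''| ≤ |Shat|/2 + Δ`. -/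
def IsHalver (X X' X'' : Finset ℕ) (k Δ : ℝ) : Prop :=
  X' ∪ X'' = X ∧ Disjoint X' X'' ∧
  ∀ S ⊆ X, (S.card : ℝ) ≤ k →
    ∃ Shat ⊆ X, (Shat.card : ℝ) ≤ k ∧ SUM Shat = SUM S ∧
      ((Shat ∩ X').card : ℝ) ≤ (Shat.card : ℝ) / 2 + Δ ∧
      ((Shat ∩ X'').card : ℝ) ≤ (Shat.card : ℝ) / 2 + Δ

theorem stmt_6 (X X' X'' : Finset ℕ) (hpos : ∀ x ∈ X, 0 < x) (k Δ : ℝ)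
    (hk : 0 ≤ k) (hΔ : 0 ≤ Δ) (hhal : IsHalver X X' X'' k Δ)
    (m : ℕ) (hm : k / 2 + Δ ≤ (m : ℝ)) :
    SUMSleR X k ⊆ SUMSle X' m + SUMSle X'' m ∧
      SUMSle X' m + SUMSle X'' m ⊆ SUMS X := by
  obtain ⟨hun, hdis, hh⟩ := hhal
  constructor
  · rintro y ⟨S, hS, hSc, rfl⟩
    obtain ⟨T, hT, hTc, hTsum, h1, h2⟩ := hh S hS hSc
    refine ⟨SUM (T ∩ X'), ⟨T ∩ X', Finset.inter_subset_right, ?_, rfl⟩,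
      SUM (T ∩ X''), ⟨T ∩ X'', Finset.inter_subset_right, ?_, rfl⟩, ?_⟩
    · exact_mod_cast h1.trans ((add_le_add (by linarith : (T.card : ℝ)/2 ≤ k/2) (le_refl Δ)).trans hm)
    · exact_mod_cast h2.trans ((add_le_add (by linarith : (T.card : ℝ)/2 ≤ k/2) (le_refl Δ)).trans hm)
    · have hd : Disjoint (T ∩ X') (T ∩ X'') :=
        hdis.mono Finset.inter_subset_right Finset.inter_subset_right
      have hu : (T ∩ X') ∪ (T ∩ X'') = T := by
        rw [← Finset.inter_union_distrib_left, hun]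
        exact Finset.inter_eq_left.mpr hT
      have := Finset.sum_union hd (f := id)
      rw [hu] at this
      rw [← hTsum]
      exact this.symm
  · rintro y ⟨a, ⟨S, hS, _, rfl⟩, b, ⟨T, hT, _, rfl⟩, rfl⟩
    have hd : Disjoint S T := hdis.mono hS hT
    refine ⟨S ∪ T, ?_, ?_⟩
    · rw [← hun]; exact Finset.union_subset_union hS hT
    · exact Finset.sum_union hd (f := id)
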